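/- Let ε > 0, let K be a nonnegative integer, let s > 0, and let s₁, …, s_{K+1} be reals with s_k ≥ s for every k. Let (x_k)_{k=0}^{K+1}, (x̄_k)_{k=0}^{K+1} and (μ_k)_{k=1}^{K+1} be real sequences such that: x₀ = x̄₀; |x_k − μ_{k+1}| ≤ K + 1 for all 0 ≤ k ≤ K; x_{k+1} = x_k e^{−s_{k+1}/ε} + μ_{k+1} (1 − e^{−s_{k+1}/ε}) for all 0 ≤ k ≤ K; and |μ_{k+1} − x̄_{k+1}| ≤ max_{0≤j≤k} |x_j − x̄_j| for all 0 ≤ k ≤ K. Then |x_{K+1} − x̄_{K+1}| ≤ (K+1)² e^{−s/ε}. In particular, |x_{K+1} − x̄_{K+1}| → 0 as ε → 0 with all other data fixed. -/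

import Mathlib

open Filter

/-- core estimate in the proof of Proposition 4.2 of the paper: a
deterministic recursion, in which `x` relaxes exponentially at rate `1/ε` toward targets
`μ` and `x̄` is the instantaneous-relaxation jump process, satisfies
`|x_{K+1} − x̄_{K+1}| ≤ (K+1)² e^{−s/ε}`; in particular the difference tends to `0` as
`ε → 0⁺` with all other data fixed.  The sequences are parametrized by `ε`. -/
theorem relaxation_recursion_estimate
    (K : ℕ) (s : ℝ) (hs : 0 < s)
    (sk : ℕ → ℝ) (hsk : ∀ k, 1 ≤ k → k ≤ K + 1 → s ≤ sk k)
    (x xb μ : ℝ → ℕ → ℝ)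
    (h0 : ∀ ε > (0 : ℝ), x ε 0 = xb ε 0)
    (hbound : ∀ ε > (0 : ℝ), ∀ k ≤ K, |x ε k - μ ε (k + 1)| ≤ (K : ℝ) + 1)
    (hrec : ∀ ε > (0 : ℝ), ∀ k ≤ K,
      x ε (k + 1) = x ε k * Real.exp (-(sk (k + 1)) / ε)
        + μ ε (k + 1) * (1 - Real.exp (-(sk (k + 1)) / ε)))
    (hμ : ∀ ε > (0 : ℝ), ∀ k ≤ K,
      |μ ε (k + 1) - xb ε (k + 1)|
        ≤ (Finset.range (k + 1)).sup' Finset.nonempty_range_add_one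
            (fun j => |x ε j - xb ε j|)) :
    (∀ ε > (0 : ℝ),
        |x ε (K + 1) - xb ε (K + 1)| ≤ ((K : ℝ) + 1) ^ 2 * Real.exp (-s / ε)) ∧
      Tendsto (fun ε => |x ε (K + 1) - xb ε (K + 1)|)
        (nhdsWithin 0 (Set.Ioi 0)) (nhds 0) := by
  have main : ∀ ε > (0 : ℝ), ∀ k, k ≤ K + 1 →
      |x ε k - xb ε k| ≤ (k : ℝ) * ((K : ℝ) + 1) * Real.exp (-s / ε) := by
    intro ε hε k
    induction k using Nat.strong_induction_on with
    | _ k ih =>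
      intro hk
      match k with
      | 0 => simp [h0 ε hε]
      | Nat.succ n =>
        have hn : n ≤ K := by omega
        have hE : 0 < Real.exp (-s / ε) := Real.exp_pos _
        have hexp : Real.exp (-(sk (n + 1)) / ε) ≤ Real.exp (-s / ε) := by
          apply Real.exp_le_exp.mpr
          have hs' : s ≤ sk (n + 1) := hsk (n + 1) (by omega) (by omega)
          rw [neg_div, neg_div, neg_le_neg_iff]
          gcongr
        have hdiff : x ε (n + 1) - xb ε (n + 1)
            = (x ε n - μ ε (n + 1)) * Real.exp (-(sk (n + 1)) / ε)
              + (μ ε (n + 1) - xb ε (n + 1)) := by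
          rw [hrec ε hε n hn]; ring
        have hsup : (Finset.range (n + 1)).sup' Finset.nonempty_range_add_one
            (fun j => |x ε j - xb ε j|)
            ≤ (n : ℝ) * ((K : ℝ) + 1) * Real.exp (-s / ε) := by
          apply Finset.sup'_le
          intro j hj
          have hj' : j < n + 1 := Finset.mem_range.mp hj
          calc |x ε j - xb ε j| ≤ (j : ℝ) * ((K : ℝ) + 1) * Real.exp (-s / ε) :=
                ih j hj' (by omega)
            _ ≤ (n : ℝ) * ((K : ℝ) + 1) * Real.exp (-s / ε) := by
                have hjn : (j : ℝ) ≤ (n : ℝ) := by exact_mod_cast Nat.lt_succ_iff.mp hj'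
                have hK1 : (0:ℝ) ≤ (K : ℝ) + 1 := by positivity
                have := mul_le_mul_of_nonneg_right
                  (mul_le_mul_of_nonneg_right hjn hK1) hE.le
                linarith
        have hb := hbound ε hε n hn
        have hμb := hμ ε hε n hn
        calc |x ε (n + 1) - xb ε (n + 1)|
            ≤ |x ε n - μ ε (n + 1)| * Real.exp (-(sk (n + 1)) / ε)
              + |μ ε (n + 1) - xb ε (n + 1)| := by
              rw [hdiff]
              refine (abs_add_le _ _).trans ?_
              rw [abs_mul, abs_of_pos (Real.exp_pos _)]
          _ ≤ ((K : ℝ) + 1) * Real.exp (-s / ε)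
              + (n : ℝ) * ((K : ℝ) + 1) * Real.exp (-s / ε) := by
              have h1 : |x ε n - μ ε (n + 1)| * Real.exp (-(sk (n + 1)) / ε)
                  ≤ ((K : ℝ) + 1) * Real.exp (-s / ε) :=
                mul_le_mul hb hexp (Real.exp_pos _).le (by positivity)
              linarith [hμb.trans hsup]
          _ = ((n : ℝ) + 1) * ((K : ℝ) + 1) * Real.exp (-s / ε) := by ring
          _ = ((n + 1 : ℕ) : ℝ) * ((K : ℝ) + 1) * Real.exp (-s / ε) := by push_cast; ring
  have hmain : ∀ ε > (0 : ℝ),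
      |x ε (K + 1) - xb ε (K + 1)| ≤ ((K : ℝ) + 1) ^ 2 * Real.exp (-s / ε) := by
    intro ε hε
    have := main ε hε (K + 1) le_rfl
    calc |x ε (K + 1) - xb ε (K + 1)|
        ≤ ((K + 1 : ℕ) : ℝ) * ((K : ℝ) + 1) * Real.exp (-s / ε) := this
      _ = ((K : ℝ) + 1) ^ 2 * Real.exp (-s / ε) := by push_cast; ring
  refine ⟨hmain, ?_⟩
  have hb : Tendsto (fun ε : ℝ => ((K : ℝ) + 1) ^ 2 * Real.exp (-s / ε))
      (nhdsWithin 0 (Set.Ioi 0)) (nhds 0) := by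
    have h1 : Tendsto (fun ε : ℝ => -s / ε) (nhdsWithin 0 (Set.Ioi 0)) atBot := by
      have h2 : Tendsto (fun ε : ℝ => s / ε) (nhdsWithin 0 (Set.Ioi 0)) atTop := by
        simpa [div_eq_mul_inv] using
          (tendsto_inv_nhdsGT_zero.const_mul_atTop hs)
      have h3 := tendsto_neg_atBot_iff.mpr h2
      simpa [neg_div] using h3
    have h3 : Tendsto (fun ε : ℝ => Real.exp (-s / ε))
        (nhdsWithin 0 (Set.Ioi 0)) (nhds 0) := Real.tendsto_exp_atBot.comp h1
    simpa using h3.const_mul (((K : ℝ) + 1) ^ 2)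
  apply squeeze_zero' ?_ ?_ hb
  · filter_upwards [self_mem_nhdsWithin] with ε _ using abs_nonneg _
  · filter_upwards [self_mem_nhdsWithin] with ε hε using hmain ε hε
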